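/- Let 1 < p < q < ∞, let a ∈ L^∞(ℝ^n) be nonnegative, and let Q be a cube with |Q| > 1. Then for any measurable f with ‖f‖_{L^p(ℝ^n)} ≤ 1, ⨍_Q φ(x, ⨍_Q |f|dy) dx ≤ C ⨍_Q |f|^p dx ≤ C' ⨍_Q φ(x,|f(x)|)dx, where φ(x,t) = (1/p)t^p + (1/q)a(x)t^q and C, C' depend only on p, q, ‖a‖_∞. -/

import Mathlib

open MeasureTheory

/-- The axis-parallel cube with lower corner `z` and sidelength `ℓ`. -/
def cube (n : ℕ) (z : Fin n → ℝ) (ℓ : ℝ) : Set (Fin n → ℝ) :=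
  {x | ∀ i, z i ≤ x i ∧ x i ≤ z i + ℓ}

/-- Let `1 < p < q`, `a ∈ L^∞` nonnegative, and `Q` a cube with
`|Q| > 1`. Then for any `f` with `‖f‖_{L^p(ℝⁿ)} ≤ 1`,
`⨍_Q φ(x, ⨍_Q |f|) dx ≤ C·⨍_Q |f|^p dx ≤ C'·⨍_Q φ(x,|f(x)|) dx`,
where `φ(x,t) = (1/p)t^p + (1/q)a(x)t^q` and `C, C'` depend only on `p, q, ‖a‖_∞`. -/
theorem double_phase_jensen_large_cubes (n : ℕ) (p q : ℝ)
    (hp : 1 < p) (hpq : p < q) (M : ℝ)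
    (a : (Fin n → ℝ) → ℝ) (ha : ∀ x, 0 ≤ a x) (hameas : Measurable a)
    (haM : ∀ x, a x ≤ M)
    (φ : (Fin n → ℝ) → ℝ → ℝ)
    (hφ : ∀ x t, φ x t = (1 / p) * t ^ p + (1 / q) * a x * t ^ q) :
    ∃ C C' : ℝ, 0 < C ∧ 0 < C' ∧
      ∀ (f : (Fin n → ℝ) → ℝ), Measurable f →
        (∫⁻ x, ENNReal.ofReal (|f x| ^ p)) ≤ 1 →
      ∀ (z : Fin n → ℝ) (ℓ : ℝ), 0 < ℓ → 1 < ℓ ^ n →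
        (∫⁻ x in cube n z ℓ,
            ENNReal.ofReal (φ x ((ℓ ^ n)⁻¹ * ∫ y in cube n z ℓ, |f y|)))
          ≤ ENNReal.ofReal C * ∫⁻ x in cube n z ℓ, ENNReal.ofReal (|f x| ^ p) ∧
        ENNReal.ofReal C * (∫⁻ x in cube n z ℓ, ENNReal.ofReal (|f x| ^ p))
          ≤ ENNReal.ofReal C' *
            ∫⁻ x in cube n z ℓ, ENNReal.ofReal (φ x |f x|) := by
  have hp0 : (0 : ℝ) < p := lt_trans one_pos hp
  have hq0 : (0 : ℝ) < q := lt_trans hp0 hpq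
  have hM0 : (0 : ℝ) ≤ M := le_trans (ha 0) (haM 0)
  set C : ℝ := 1 / p + M / q with hC
  have hC0 : 0 < C := by positivity
  refine ⟨C, C * p, hC0, by positivity, ?_⟩
  intro f hf hf1 z ℓ hℓ hℓn
  set Q : Set (Fin n → ℝ) := cube n z ℓ with hQ
  have hQeq : Q = Set.univ.pi fun i => Set.Icc (z i) (z i + ℓ) := by
    ext x
    simp only [hQ, cube, Set.mem_setOf_eq, Set.mem_univ_pi, Set.mem_Icc]
  have hQmeas : MeasurableSet Q := by
    rw [hQeq]; exact MeasurableSet.univ_pi fun i => measurableSet_Icc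
  have hℓn0 : (0 : ℝ) < ℓ ^ n := lt_trans one_pos hℓn
  have hQvol : volume Q = ENNReal.ofReal (ℓ ^ n) := by
    rw [hQeq, volume_pi_pi]
    simp only [Real.volume_Icc, add_sub_cancel_left]
    rw [Finset.prod_const, Finset.card_univ, Fintype.card_fin,
      ← ENNReal.ofReal_pow hℓ.le]
  -- the function |f|^p
  have hgmeas : Measurable fun x => |f x| ^ p :=
    (Real.continuous_rpow_const hp0.le).measurable.comp hf.abs
  have hgnn : ∀ x, (0 : ℝ) ≤ |f x| ^ p := fun x =>
    Real.rpow_nonneg (abs_nonneg _) p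
  have hgl : (∫⁻ x in Q, ENNReal.ofReal (|f x| ^ p)) ≤ 1 :=
    le_trans (lintegral_mono' Measure.restrict_le_self le_rfl) hf1
  have hInt : IntegrableOn (fun x => |f x| ^ p) Q := by
    refine ⟨hgmeas.aestronglyMeasurable, ?_⟩
    rw [hasFiniteIntegral_iff_ofReal (ae_of_all _ hgnn)]
    exact lt_of_le_of_lt hgl ENNReal.one_lt_top
  -- |f| is integrable on Q
  have habs_le : ∀ x, |f x| ≤ 1 + |f x| ^ p := by
    intro x
    rcases le_total (|f x|) 1 with h | h
    · exact le_trans h (le_add_of_nonneg_right (hgnn x))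
    · calc |f x| = |f x| ^ (1 : ℝ) := (Real.rpow_one _).symm
        _ ≤ |f x| ^ p := Real.rpow_le_rpow_of_exponent_le h hp.le
        _ ≤ 1 + |f x| ^ p := le_add_of_nonneg_left one_pos.le
  haveI : IsFiniteMeasure (volume.restrict Q) := by
    constructor
    rw [Measure.restrict_apply_univ, hQvol]
    exact ENNReal.ofReal_lt_top
  have hIntf : IntegrableOn (fun x => |f x|) Q := by
    refine Integrable.mono' ((integrable_const 1).add hInt) hf.abs.aestronglyMeasurable
      (ae_of_all _ fun x => ?_)
    rw [Real.norm_eq_abs, abs_abs]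
    exact habs_le x
  haveI : NeZero (volume.restrict Q) := by
    constructor
    rw [Ne, Measure.restrict_eq_zero, hQvol, ← ENNReal.ofReal_zero,
      ENNReal.ofReal_eq_ofReal_iff hℓn0.le le_rfl]
    exact hℓn0.ne'
  -- real integral quantities
  set I : ℝ := ∫ x in Q, |f x| ^ p with hI
  have hI0 : 0 ≤ I := integral_nonneg hgnn
  have hIofReal : ENNReal.ofReal I = ∫⁻ x in Q, ENNReal.ofReal (|f x| ^ p) :=
    ofReal_integral_eq_lintegral_ofReal hInt (ae_of_all _ hgnn)
  have hI1 : I ≤ 1 := by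
    have := hgl
    rw [← hIofReal] at this
    exact (ENNReal.ofReal_le_one).mp this
  set m : ℝ := (ℓ ^ n)⁻¹ * ∫ y in Q, |f y| with hm
  have hm0 : 0 ≤ m := mul_nonneg (inv_nonneg.mpr hℓn0.le)
    (integral_nonneg fun x => abs_nonneg _)
  set A : ℝ := (ℓ ^ n)⁻¹ * I with hA
  have hA0 : 0 ≤ A := mul_nonneg (inv_nonneg.mpr hℓn0.le) hI0
  have hA1 : A ≤ 1 := by
    calc A ≤ (ℓ ^ n)⁻¹ * 1 := by
          exact mul_le_mul_of_nonneg_left hI1 (inv_nonneg.mpr hℓn0.le)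
      _ = (ℓ ^ n)⁻¹ := mul_one _
      _ ≤ 1 := by
          rw [inv_le_one_iff₀]; right; exact hℓn.le
  have htoReal : (volume.restrict Q Set.univ).toReal = ℓ ^ n := by
    rw [Measure.restrict_apply_univ, hQvol, ENNReal.toReal_ofReal hℓn0.le]
  have havg : ∀ g : (Fin n → ℝ) → ℝ, (⨍ x in Q, g x) = (ℓ ^ n)⁻¹ * ∫ x in Q, g x := by
    intro g
    rw [average_eq, measureReal_def, htoReal, smul_eq_mul]
  -- Jensen
  have hJensen : m ^ p ≤ A := by
    have := (convexOn_rpow hp.le).map_average_le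
      (Real.continuous_rpow_const hp0.le).continuousOn isClosed_Ici
      (ae_of_all _ fun x => abs_nonneg (f x)) hIntf hInt
      (μ := volume.restrict Q) (f := fun x => |f x|)
    rwa [havg, havg] at this
  have hmq : m ^ q ≤ A := by
    have hqp0 : (0 : ℝ) < q / p := by positivity
    have hqp1 : (1 : ℝ) ≤ q / p := (one_le_div hp0).mpr hpq.le
    have h1 : m ^ q = (m ^ p) ^ (q / p) := by
      rw [← Real.rpow_mul hm0, mul_div_cancel₀ q hp0.ne']
    have h2 : (m ^ p) ^ (q / p) ≤ A ^ (q / p) :=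
      Real.rpow_le_rpow (Real.rpow_nonneg hm0 p) hJensen hqp0.le
    have h3 : A ^ (q / p) ≤ A := by
      rcases eq_or_lt_of_le hA0 with h | h
      · rw [← h, Real.zero_rpow hqp0.ne']
      · calc A ^ (q / p) ≤ A ^ (1 : ℝ) :=
              Real.rpow_le_rpow_of_exponent_ge h hA1 hqp1
          _ = A := Real.rpow_one A
    rw [h1]; exact h2.trans h3
  have hφm : ∀ x, φ x m ≤ C * A := by
    intro x
    rw [hφ]
    have step : (1 / p) * m ^ p + (1 / q) * a x * m ^ q
        ≤ (1 / p) * A + (1 / q) * M * A := by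
      refine add_le_add (mul_le_mul_of_nonneg_left hJensen (by positivity)) ?_
      exact mul_le_mul (mul_le_mul_of_nonneg_left (haM x) (by positivity))
        hmq (Real.rpow_nonneg hm0 q) (by positivity)
    refine step.trans (le_of_eq ?_)
    rw [hC]; ring
  constructor
  · calc ∫⁻ x in Q, ENNReal.ofReal (φ x m)
        ≤ ∫⁻ _ in Q, ENNReal.ofReal (C * A) :=
          lintegral_mono fun x => ENNReal.ofReal_le_ofReal (hφm x)
      _ = ENNReal.ofReal (C * A) * volume Q := setLIntegral_const Q _
      _ = ENNReal.ofReal (C * A * ℓ ^ n) := by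
          rw [hQvol, ← ENNReal.ofReal_mul (by positivity)]
      _ = ENNReal.ofReal (C * I) := by
          congr 1
          rw [hA]
          field_simp
      _ = ENNReal.ofReal C * ENNReal.ofReal I := ENNReal.ofReal_mul hC0.le
      _ = ENNReal.ofReal C * ∫⁻ x in Q, ENNReal.ofReal (|f x| ^ p) := by
          rw [hIofReal]
  · have hpt : ∀ x, ENNReal.ofReal (|f x| ^ p)
        ≤ ENNReal.ofReal p * ENNReal.ofReal (φ x |f x|) := by
      intro x
      rw [← ENNReal.ofReal_mul hp0.le]
      apply ENNReal.ofReal_le_ofReal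
      rw [hφ]
      have h1 : p * (1 / p * |f x| ^ p) = |f x| ^ p := by field_simp
      calc |f x| ^ p = p * (1 / p * |f x| ^ p) := h1.symm
        _ ≤ p * (1 / p * |f x| ^ p + 1 / q * a x * |f x| ^ q) := by
            refine mul_le_mul_of_nonneg_left (le_add_of_nonneg_right ?_) hp0.le
            exact mul_nonneg (mul_nonneg (by positivity) (ha x))
              (Real.rpow_nonneg (abs_nonneg _) q)
    calc ENNReal.ofReal C * (∫⁻ x in Q, ENNReal.ofReal (|f x| ^ p))
        ≤ ENNReal.ofReal C *
            ∫⁻ x in Q, ENNReal.ofReal p * ENNReal.ofReal (φ x |f x|) :=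
          mul_le_mul_right (lintegral_mono hpt) _
      _ = ENNReal.ofReal C *
            (ENNReal.ofReal p * ∫⁻ x in Q, ENNReal.ofReal (φ x |f x|)) := by
          rw [lintegral_const_mul' _ _ ENNReal.ofReal_ne_top]
      _ = ENNReal.ofReal (C * p) * ∫⁻ x in Q, ENNReal.ofReal (φ x |f x|) := by
          rw [← mul_assoc, ← ENNReal.ofReal_mul hC0.le]
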